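/- Let H be a reduced double-well type potential and let V be a continuous calibrated sub-action of H. Then V is constant on each cylinder [0^n 1] and [1^n 0] (n ≥ 1), with V|[0^n 1] = min{ V(0^∞), V(1^∞) + inf_{k≥n} H_k^1 } and V|[1^n 0] = min{ V(1^∞), V(0^∞) + inf_{k≥n} H_k^0 }; in particular min V = min{V(0^∞), V(1^∞)}. Moreover, if γ = 0 (equivalently H_∞^0 = H_∞^1 = 0), then the zero function is the unique calibrated sub-action V with min V = 0, and the functions V_β := −β^{−1} ln Φ_β converge uniformly to 0 as β → +∞. -/
import Mathlib


open MeasureTheory Filter Topology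

/-- The one-sided full shift space on two symbols. -/
abbrev Sig : Type := ℕ → Fin 2

/-- The left shift map. -/
def shft : Sig → Sig := fun x n => x (n + 1)

/-- Concatenation of a symbol with a configuration. -/
def cons2 (i : Fin 2) (x : Sig) : Sig := fun n => match n with
  | 0 => i
  | Nat.succ k => x k

/-- `x` and `y` agree on their first `n` coordinates. -/
def nClose (n : ℕ) (x y : Sig) : Prop := ∀ k, k < n → x k = y k

/-- The `n`-th variation of `H`. -/
noncomputable def Var (H : Sig → ℝ) (n : ℕ) : ℝ :=
  sSup {d : ℝ | ∃ x y : Sig, nClose n x y ∧ d = |H x - H y|}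

/-- `H` has summable variation. -/
def SummableVar (H : Sig → ℝ) : Prop := Summable (fun n : ℕ => Var H (n + 1))

/-- The transfer operator at inverse temperature `β`. -/
noncomputable def transfer (β : ℝ) (H : Sig → ℝ) (Φ : Sig → ℝ) : Sig → ℝ :=
  fun x => Real.exp (-β * H (cons2 0 x)) * Φ (cons2 0 x)
         + Real.exp (-β * H (cons2 1 x)) * Φ (cons2 1 x)

/-- The cylinder set determined by a finite word. -/
def cyl (w : List (Fin 2)) : Set Sig := {x | ∀ i : ℕ, ∀ h : i < w.length, x i = w.get ⟨i, h⟩}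

/-- The fixed point `0^∞`. -/
def zpt : Sig := fun _ => 0

/-- The fixed point `1^∞`. -/
def opt : Sig := fun _ => 1

/-- The minimizing ergodic value of `H`. -/
noncomputable def Hbar (H : Sig → ℝ) : ℝ :=
  sInf {r : ℝ | ∃ μ : Measure Sig, IsProbabilityMeasure μ ∧ μ.map shft = μ ∧ r = ∫ x, H x ∂μ}

/-- A minimizing measure for `H`. -/
def IsMinimizing (H : Sig → ℝ) (μ : Measure Sig) : Prop :=
  IsProbabilityMeasure μ ∧ μ.map shft = μ ∧
  ∀ ν : Measure Sig, IsProbabilityMeasure ν → ν.map shft = ν →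
    ∫ x, H x ∂μ ≤ ∫ x, H x ∂ν

/-- The (topological) support of a measure. -/
def mSupport (μ : Measure Sig) : Set Sig := {x | ∀ U : Set Sig, IsOpen U → x ∈ U → μ U ≠ 0}

/-- The Mather set of `H` : union of supports of minimizing measures. -/
def mather (H : Sig → ℝ) : Set Sig := {x | ∃ μ : Measure Sig, IsMinimizing H μ ∧ x ∈ mSupport μ}

/-- Birkhoff sum of the normalized potential. -/
noncomputable def birk (H : Sig → ℝ) (k : ℕ) (z : Sig) : ℝ :=
  ∑ i ∈ Finset.range k, (H (shft^[i] z) - Hbar H)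

/-- The quantity `S_n^p(x,y)` (an infimum in `EReal`, `+∞` when the defining set is empty). -/
noncomputable def SBar (H : Sig → ℝ) (p n : ℕ) (x y : Sig) : EReal :=
  sInf {s : EReal | ∃ k : ℕ, n ≤ k ∧ ∃ z : Sig, nClose p z x ∧ nClose p (shft^[k] z) y ∧
    s = (birk H k z : EReal)}

/-- The Peierls barrier `h(x,y)`; since `S_n^p(x,y)` is nondecreasing in both `n` and `p`,
the double limit is a double supremum. -/
noncomputable def peierls (H : Sig → ℝ) (x y : Sig) : EReal := ⨆ p : ℕ, ⨆ n : ℕ, SBar H p n x y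

/-- The Lax-Oleinik operator (the two preimages of `y` under the shift are `0y` and `1y`). -/
noncomputable def laxOleinik (H V : Sig → ℝ) : Sig → ℝ :=
  fun y => min (V (cons2 0 y) + H (cons2 0 y)) (V (cons2 1 y) + H (cons2 1 y))

/-- A calibrated sub-action of `H`. -/
def IsCalibrated (H V : Sig → ℝ) : Prop :=
  Continuous V ∧ laxOleinik H V = fun y => V y + Hbar H

/-- Membership in the class `𝕂`. -/
def InK (H V : Sig → ℝ) : Prop :=
  Continuous V ∧ ∀ n : ℕ, 1 ≤ n → Var V n ≤ ∑' k : ℕ, Var H (n + 1 + k)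

/-- A reduced double-well type potential with data `(H_n^0)`, `(H_n^1)` (indexed from `n = 1`). -/
structure ReducedDW (H : Sig → ℝ) (H0 H1 : ℕ → ℝ) : Prop where
  cont : Continuous H
  nonneg : ∀ x, 0 ≤ H x
  svar : SummableVar H
  zero : ∀ x ∈ cyl [0, 0] ∪ cyl [1, 1], H x = 0
  pos0 : ∀ n, 1 ≤ n → 0 < H0 n
  pos1 : ∀ n, 1 ≤ n → 0 < H1 n
  val0 : ∀ n, 1 ≤ n → ∀ x ∈ cyl (0 :: (List.replicate n 1 ++ [0])), H x = H0 n
  val1 : ∀ n, 1 ≤ n → ∀ x ∈ cyl (1 :: (List.replicate n 0 ++ [1])), H x = H1 n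
  bdd0 : ∀ k : ℕ, BddAbove (Set.range fun n : ℕ => |H0 (k + 1) - H0 (k + 1 + n)|)
  bdd1 : ∀ k : ℕ, BddAbove (Set.range fun n : ℕ => |H1 (k + 1) - H1 (k + 1 + n)|)
  sum0 : Summable (fun k : ℕ => ⨆ n : ℕ, |H0 (k + 1) - H0 (k + 1 + n)|)
  sum1 : Summable (fun k : ℕ => ⨆ n : ℕ, |H1 (k + 1) - H1 (k + 1 + n)|)

/-- A double-well type potential with data `a_n^0, a_n^1, b_n^0, b_n^1` (indexed from `n = 1`). -/
structure DW (H : Sig → ℝ) (a0 a1 b0 b1 : ℕ → ℝ) : Prop where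
  cont : Continuous H
  nonneg : ∀ x, 0 ≤ H x
  svar : SummableVar H
  anneg0 : ∀ n, 1 ≤ n → 0 ≤ a0 n
  anneg1 : ∀ n, 1 ≤ n → 0 ≤ a1 n
  bpos0 : ∀ n, 1 ≤ n → 0 < b0 n
  bpos1 : ∀ n, 1 ≤ n → 0 < b1 n
  vala0 : ∀ n, 1 ≤ n → ∀ x ∈ cyl (0 :: (List.replicate n 0 ++ [1])), H x = a0 n
  vala1 : ∀ n, 1 ≤ n → ∀ x ∈ cyl (1 :: (List.replicate n 1 ++ [0])), H x = a1 n
  valb0 : ∀ n, 1 ≤ n → ∀ x ∈ cyl (0 :: (List.replicate n 1 ++ [0])), H x = b0 n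
  valb1 : ∀ n, 1 ≤ n → ∀ x ∈ cyl (1 :: (List.replicate n 0 ++ [1])), H x = b1 n
  suma0 : Summable (fun n : ℕ => ((n + 1 : ℕ) : ℝ) * a0 (n + 1))
  suma1 : Summable (fun n : ℕ => ((n + 1 : ℕ) : ℝ) * a1 (n + 1))
  bddb0 : ∀ k : ℕ, BddAbove (Set.range fun n : ℕ => |b0 (k + 1) - b0 (k + 1 + n)|)
  bddb1 : ∀ k : ℕ, BddAbove (Set.range fun n : ℕ => |b1 (k + 1) - b1 (k + 1 + n)|)
  sumb0 : Summable (fun k : ℕ => ⨆ n : ℕ, |b0 (k + 1) - b0 (k + 1 + n)|)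
  sumb1 : Summable (fun k : ℕ => ⨆ n : ℕ, |b1 (k + 1) - b1 (k + 1 + n)|)

/-- The series `F_β(λ) = Σ_{k≥1} λ^{-k} e^{-β H_k}`. -/
noncomputable def Fser (β : ℝ) (Hs : ℕ → ℝ) (lam : ℝ) : ℝ :=
  ∑' k : ℕ, (lam ^ (k + 1))⁻¹ * Real.exp (-β * Hs (k + 1))

/-- The series `F̃_β(λ) = Σ_{k≥1} k λ^{-k} e^{-β H_k}`. -/
noncomputable def Ftser (β : ℝ) (Hs : ℕ → ℝ) (lam : ℝ) : ℝ :=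
  ∑' k : ℕ, ((k + 1 : ℕ) : ℝ) * (lam ^ (k + 1))⁻¹ * Real.exp (-β * Hs (k + 1))

/-- The data of the Ruelle-Perron-Frobenius solution and Gibbs measure at inverse temperature `β`:
eigenfunction `Φ` (positive, continuous, max 1), eigenvalue `lam`, eigenprobability `ν`,
and the Gibbs measure `μ = Φ ν / ∫ Φ dν`. -/
def GibbsData (H : Sig → ℝ) (β : ℝ) (Φ : Sig → ℝ) (lam : ℝ) (ν μ : Measure Sig) : Prop :=
  Continuous Φ ∧ (∀ x, 0 < Φ x) ∧ IsGreatest (Set.range Φ) 1 ∧ 0 < lam ∧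
  (transfer β H Φ = fun x => lam * Φ x) ∧
  IsProbabilityMeasure ν ∧
  (∀ f : Sig → ℝ, Continuous f → ∫ x, transfer β H f x ∂ν = lam * ∫ x, f x ∂ν) ∧
  μ = (ENNReal.ofReal (∫ x, Φ x ∂ν))⁻¹ • ν.withDensity (fun x => ENNReal.ofReal (Φ x))

-- basics
lemma aux_fin2 (i : Fin 2) : i = 0 ∨ i = 1 := by revert i; decide

lemma aux_fin2_other {a b i : Fin 2} (hab : a ≠ b) (h : i ≠ a) : i = b := by
  revert a b i; decide

@[simp] lemma cons2_zero (i : Fin 2) (x : Sig) : cons2 i x 0 = i := rfl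
@[simp] lemma cons2_succ (i : Fin 2) (x : Sig) (k : ℕ) : cons2 i x (k+1) = x k := rfl

lemma aux_get_rep_app {n : ℕ} {a b : Fin 2} {i : ℕ} (h : i < (List.replicate n a ++ [b]).length) :
    (List.replicate n a ++ [b]).get ⟨i, h⟩ = if i < n then a else b := by
  have hlen : (List.replicate n a ++ [b]).length = n + 1 := by simp
  rw [List.get_eq_getElem]
  rcases lt_or_ge i n with hi | hi
  · rw [List.getElem_append_left (by simpa using hi)]
    simp [hi]
  · have : i = n := by omega
    subst this
    rw [List.getElem_append_right (by simp)]
    simp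

lemma aux_mem_cyl_rep {n : ℕ} {a b : Fin 2} {x : Sig} :
    x ∈ cyl (List.replicate n a ++ [b]) ↔ (∀ j, j < n → x j = a) ∧ x n = b := by
  have hlen : (List.replicate n a ++ [b]).length = n + 1 := by simp
  constructor
  · intro h
    constructor
    · intro j hj
      have := h j (by omega)
      rwa [aux_get_rep_app, if_pos hj] at this
    · have := h n (by omega)
      rwa [aux_get_rep_app, if_neg (lt_irrefl n)] at this
  · rintro ⟨h1, h2⟩ i hi
    rw [aux_get_rep_app]
    rcases lt_or_ge i n with hi' | hi'
    · rw [if_pos hi']; exact h1 i hi'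
    · have : i = n := by omega
      subst this
      rw [if_neg (lt_irrefl i)]; exact h2

lemma aux_mem_cyl_cons {a : Fin 2} {l : List (Fin 2)} {x : Sig}
    (h0 : x 0 = a) (hl : shft x ∈ cyl l) : x ∈ cyl (a :: l) := by
  intro i hi
  cases i with
  | zero => simpa using h0
  | succ j =>
    have hj : j < l.length := by simpa using hi
    have := hl j hj
    simpa [shft] using this

-- H-facts from ReducedDW-style hypotheses
section Hfacts
variable {H : Sig → ℝ} {H0 H1 : ℕ → ℝ}

lemma aux_H_same (hz : ∀ x ∈ cyl [0, 0] ∪ cyl [1, 1], H x = 0)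
    {i : Fin 2} {x : Sig} (h : x 0 = i) : H (cons2 i x) = 0 := by
  apply hz
  rcases aux_fin2 i with hi | hi
  · left
    intro j hj
    have hj2 : j < 2 := by simpa using hj
    subst hi
    interval_cases j
    · rfl
    · simpa using h
  · right
    intro j hj
    have hj2 : j < 2 := by simpa using hj
    subst hi
    interval_cases j
    · rfl
    · simpa using h

lemma aux_H_sw1 (hval : ∀ n, 1 ≤ n → ∀ x ∈ cyl (1 :: (List.replicate n 0 ++ [1])), H x = H1 n)
    {t : ℕ} (ht : 1 ≤ t) {x : Sig} (h0 : ∀ j, j < t → x j = 0) (h1 : x t = 1) :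
    H (cons2 1 x) = H1 t := by
  apply hval t ht
  apply aux_mem_cyl_cons rfl
  rw [aux_mem_cyl_rep]
  exact ⟨fun j hj => h0 j hj, h1⟩

lemma aux_H_sw0 (hval : ∀ n, 1 ≤ n → ∀ x ∈ cyl (0 :: (List.replicate n 1 ++ [0])), H x = H0 n)
    {t : ℕ} (ht : 1 ≤ t) {x : Sig} (h0 : ∀ j, j < t → x j = 1) (h1 : x t = 0) :
    H (cons2 0 x) = H0 t := by
  apply hval t ht
  apply aux_mem_cyl_cons rfl
  rw [aux_mem_cyl_rep]
  exact ⟨fun j hj => h0 j hj, h1⟩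

end Hfacts

-- Var facts
section VarFacts
variable {H : Sig → ℝ}

lemma aux_H_bdd (hc : Continuous H) : ∃ C : ℝ, ∀ x, |H x| ≤ C := by
  obtain ⟨x₀, -, hx₀⟩ := isCompact_univ.exists_isMaxOn (Set.univ_nonempty)
    (continuous_abs.comp hc).continuousOn
  exact ⟨|H x₀|, fun x => hx₀ (Set.mem_univ x)⟩

lemma aux_var_nonneg (n : ℕ) (hc : Continuous H) : 0 ≤ Var H n := by
  obtain ⟨C, hC⟩ := aux_H_bdd hc
  apply le_csSup
  · refine ⟨2 * C, ?_⟩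
    rintro d ⟨x, y, -, rfl⟩
    calc |H x - H y| ≤ |H x| + |H y| := abs_sub _ _
    _ ≤ 2 * C := by have := hC x; have := hC y; linarith
  · exact ⟨zpt, zpt, fun k _ => rfl, by simp⟩

lemma aux_var_bound (hc : Continuous H) {n : ℕ} {x y : Sig} (h : nClose n x y) :
    |H x - H y| ≤ Var H n := by
  obtain ⟨C, hC⟩ := aux_H_bdd hc
  apply le_csSup
  · refine ⟨2 * C, ?_⟩
    rintro d ⟨x, y, -, rfl⟩
    calc |H x - H y| ≤ |H x| + |H y| := abs_sub _ _
    _ ≤ 2 * C := by have := hC x; have := hC y; linarith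
  · exact ⟨x, y, h, rfl⟩

noncomputable def Rtail (H : Sig → ℝ) (n : ℕ) : ℝ := ∑' k : ℕ, Var H (n + 1 + k)

lemma aux_Rtail_eq (n : ℕ) : Rtail H n = ∑' k : ℕ, (fun m => Var H (m + 1)) (k + n) := by
  exact tsum_congr fun k => congrArg (Var H) (by omega)

lemma aux_Rtail_summable (hs : SummableVar H) (n : ℕ) :
    Summable (fun k : ℕ => Var H (n + 1 + k)) := by
  have := (summable_nat_add_iff (f := fun m => Var H (m + 1)) n).2 hs
  apply this.congr
  intro k
  exact congrArg (Var H) (by omega)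

lemma aux_Rtail_nonneg (hc : Continuous H) (hs : SummableVar H) (n : ℕ) : 0 ≤ Rtail H n :=
  tsum_nonneg fun k => aux_var_nonneg _ hc

lemma aux_sum_var_le_Rtail (hc : Continuous H) (hs : SummableVar H) (n k : ℕ) :
    ∑ j ∈ Finset.range k, Var H (n + 1 + j) ≤ Rtail H n :=
  Summable.sum_le_tsum _ (fun j _ => aux_var_nonneg _ hc) (aux_Rtail_summable hs n)

lemma aux_Rtail_tendsto (hs : SummableVar H) : Tendsto (Rtail H) atTop (𝓝 0) := by
  have := tendsto_sum_nat_add (fun m => Var H (m + 1))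
  apply this.congr
  intro n
  exact (aux_Rtail_eq n).symm

end VarFacts

-- Hbar = 0
lemma aux_Hbar_zero {H : Sig → ℝ} (hc : Continuous H) (hnn : ∀ x, 0 ≤ H x)
    (hz : H zpt = 0) : Hbar H = 0 := by
  have hmeas : Measurable shft := continuous_pi (fun n => continuous_apply (n + 1)) |>.measurable
  have hmem : (0:ℝ) ∈ {r : ℝ | ∃ μ : Measure Sig, IsProbabilityMeasure μ ∧ μ.map shft = μ ∧
      r = ∫ x, H x ∂μ} := by
    refine ⟨Measure.dirac zpt, inferInstance, ?_, ?_⟩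
    · rw [Measure.map_dirac' hmeas]
      rfl
    · rw [integral_dirac, hz]
  apply le_antisymm
  · exact csInf_le ⟨0, by rintro r ⟨μ, hμ, -, rfl⟩; exact integral_nonneg hnn⟩ hmem
  · apply le_csInf ⟨0, hmem⟩
    rintro r ⟨μ, hμ, -, rfl⟩
    exact integral_nonneg hnn

-- Core calibrated section, symbol-parameterized
section Core

variable {H V : Sig → ℝ} {Ha Hb : ℕ → ℝ} {σa σb : Fin 2}

structure CoreHyp (H V : Sig → ℝ) (Ha Hb : ℕ → ℝ) (σa σb : Fin 2) : Prop where
  hne : σa ≠ σb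
  hVc : Continuous V
  hHnn : ∀ x, 0 ≤ H x
  hcal : ∀ y, min (V (cons2 0 y) + H (cons2 0 y)) (V (cons2 1 y) + H (cons2 1 y)) = V y
  hsame : ∀ i : Fin 2, ∀ x : Sig, x 0 = i → H (cons2 i x) = 0
  hswb : ∀ t, 1 ≤ t → ∀ x : Sig, (∀ j, j < t → x j = σa) → x t = σb → H (cons2 σb x) = Hb t
  hswa : ∀ t, 1 ≤ t → ∀ x : Sig, (∀ j, j < t → x j = σb) → x t = σa → H (cons2 σa x) = Ha t
  hapos : ∀ t, 1 ≤ t → 0 < Ha t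
  hbnn : ∀ t, 1 ≤ t → 0 ≤ Hb t

namespace CoreHyp

lemma iter_coord (i : Fin 2) (m : ℕ) (x : Sig) (j : ℕ) :
    (cons2 i)^[m] x j = if j < m then i else x (j - m) := by
  induction m generalizing j with
  | zero => simp
  | succ m ih =>
    rw [Function.iterate_succ_apply']
    cases j with
    | zero => simp
    | succ j =>
      rw [cons2_succ, ih]
      by_cases hj : j < m
      · rw [if_pos hj, if_pos (by omega)]
      · rw [if_neg hj, if_neg (by omega)]
        congr 1
        omega

lemma tendsto_iter (i : Fin 2) (x : Sig) :
    Tendsto (fun m => (cons2 i)^[m] x) atTop (𝓝 (fun _ => i : Sig)) := by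
  rw [tendsto_pi_nhds]
  intro j
  apply Tendsto.congr' (f₁ := fun _ => i) _ tendsto_const_nhds
  filter_upwards [eventually_gt_atTop j] with m hm
  rw [iter_coord, if_pos hm]

variable (hc : CoreHyp H V Ha Hb σa σb)
include hc

lemma step (x : Sig) (i : Fin 2) : V x ≤ V (cons2 i x) + H (cons2 i x) := by
  rcases aux_fin2 i with hi | hi <;> subst hi
  · rw [← hc.hcal x]; exact min_le_left _ _
  · rw [← hc.hcal x]; exact min_le_right _ _

lemma step_same {x : Sig} {i : Fin 2} (h : x 0 = i) : V x ≤ V (cons2 i x) := by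
  have := hc.step x i
  rwa [hc.hsame i x h, add_zero] at this

lemma chain_same {x : Sig} {i : Fin 2} (h : x 0 = i) (m : ℕ) :
    V x ≤ V ((cons2 i)^[m] x) := by
  induction m with
  | zero => simp
  | succ m ih =>
    rw [Function.iterate_succ_apply']
    refine ih.trans (hc.step_same ?_)
    cases m with
    | zero => simpa using h
    | succ m => rw [iter_coord, if_pos (by omega)]

lemma ub_const {x : Sig} {i : Fin 2} (h : x 0 = i) : V x ≤ V (fun _ => i) := by
  have hlim : Tendsto (fun m => V ((cons2 i)^[m] x)) atTop (𝓝 (V (fun _ => i))) :=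
    (hc.hVc.tendsto _).comp (tendsto_iter i x)
  exact ge_of_tendsto' hlim (hc.chain_same h)

variable {n : ℕ} {y : Sig}

lemma ub_b (hn : 1 ≤ n) (hy0 : ∀ j, j < n → y j = σa) (hyn : y n = σb) (k : ℕ) :
    V y ≤ V (fun _ => σb) + Hb (n + k) := by
  set z := (cons2 σa)^[k] y with hz
  have hz0 : ∀ j, j < n + k → z j = σa := by
    intro j hj
    rw [hz, iter_coord]
    by_cases h : j < k
    · rw [if_pos h]
    · rw [if_neg h]; exact hy0 _ (by omega)
  have hzn : z (n + k) = σb := by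
    rw [hz, iter_coord, if_neg (by omega)]
    have : n + k - k = n := by omega
    rw [this]; exact hyn
  have h1 : V y ≤ V z := hc.chain_same (hy0 0 hn) k
  have h2 : V z ≤ V (cons2 σb z) + H (cons2 σb z) := hc.step z σb
  have h3 : H (cons2 σb z) = Hb (n + k) := hc.hswb (n + k) (by omega) z hz0 hzn
  have h4 : V (cons2 σb z) ≤ V (fun _ => σb) := hc.ub_const rfl
  rw [h3] at h2
  linarith

lemma iInf_bddBelow (hn : 1 ≤ n) : BddBelow (Set.range fun k : ℕ => Hb (n + k)) := by
  refine ⟨0, ?_⟩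
  rintro r ⟨k, rfl⟩
  exact hc.hbnn (n + k) (by omega)

lemma upper (hn : 1 ≤ n) (hy0 : ∀ j, j < n → y j = σa) (hyn : y n = σb) :
    V y ≤ min (V (fun _ => σa)) (V (fun _ => σb) + ⨅ k : ℕ, Hb (n + k)) := by
  refine le_min (hc.ub_const (hy0 0 hn)) ?_
  have : V y - V (fun _ => σb) ≤ ⨅ k : ℕ, Hb (n + k) := by
    apply le_ciInf
    intro k
    have := hc.ub_b hn hy0 hyn k
    linarith
  linarith

lemma lower (hn : 1 ≤ n) (hy0 : ∀ j, j < n → y j = σa) (hyn : y n = σb) :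
    min (V (fun _ => σa)) (V (fun _ => σb) + ⨅ k : ℕ, Hb (n + k)) ≤ V y := by
  -- global minimum of V
  obtain ⟨xm, -, hxm⟩ := isCompact_univ.exists_isMinOn (Set.univ_nonempty) hc.hVc.continuousOn
  have hVlb : ∀ x, V xm ≤ V x := fun x => hxm (Set.mem_univ x)
  -- greedy backward orbit
  have hch : ∀ w : Sig, ∃ i : Fin 2, V (cons2 i w) + H (cons2 i w) = V w := by
    intro w
    rcases min_cases (V (cons2 0 w) + H (cons2 0 w)) (V (cons2 1 w) + H (cons2 1 w)) with
      ⟨h, -⟩ | ⟨h, -⟩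
    · exact ⟨0, by rw [← hc.hcal w, h]⟩
    · exact ⟨1, by rw [← hc.hcal w, h]⟩
  choose f hf using hch
  set z : ℕ → Sig := fun m => (fun w => cons2 (f w) w)^[m] y with hzdef
  have hzsucc : ∀ m, z (m + 1) = cons2 (f (z m)) (z m) := by
    intro m
    show (fun w => cons2 (f w) w)^[m+1] y = _
    rw [Function.iterate_succ_apply']
  have hstep : ∀ m, V (z (m + 1)) + H (z (m + 1)) = V (z m) := by
    intro m
    rw [hzsucc m]
    exact hf (z m)
  set T : ℕ → ℝ := fun m => ∑ j ∈ Finset.range m, H (z (j + 1)) with hTdef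
  have hTsucc : ∀ m, T (m + 1) = T m + H (z (m + 1)) := by
    intro m
    simp [hTdef, Finset.sum_range_succ]
  have hTel : ∀ m, V (z m) + T m = V y := by
    intro m
    induction m with
    | zero => simp [hTdef, hzdef]
    | succ m ih =>
      have h1 := hTsucc m
      have := hstep m
      linarith
  have hTnn : ∀ m, 0 ≤ T m := fun m => Finset.sum_nonneg fun j _ => hc.hHnn _
  have hsing : ∀ p m, 1 ≤ p → p ≤ m → H (z p) ≤ T m := by
    intro p m hp hpm
    have : H (z ((p - 1) + 1)) ≤ T m := by
      apply Finset.single_le_sum (fun j _ => hc.hHnn (z (j + 1)))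
      exact Finset.mem_range.2 (by omega)
    have hpp : p - 1 + 1 = p := by omega
    rwa [hpp] at this
  -- coordinates
  have hcsucc : ∀ m j, z (m + 1) (j + 1) = z m j := by
    intro m j
    rw [hzsucc m, cons2_succ]
  have hcoord : ∀ m j, j ≤ m → z m j = z (m - j) 0 := by
    intro m
    induction m with
    | zero => intro j hj; interval_cases j; rfl
    | succ m ih =>
      intro j hj
      cases j with
      | zero => rfl
      | succ j =>
        rw [hcsucc m j, ih j (by omega)]
        congr 1
        omega
  have hcoord2 : ∀ m j, z m (m + j) = y j := by
    intro m
    induction m with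
    | zero => intro j; rw [Nat.zero_add]; rfl
    | succ m ih =>
      intro j
      have : m + 1 + j = (m + j) + 1 := by omega
      rw [this, hcsucc m (m + j), ih j]
  have hy00 : y 0 = σa := hy0 0 hn
  have hz00 : z 0 0 = σa := hy00
  -- infimum facts
  set I : ℝ := ⨅ k : ℕ, Hb (n + k) with hI
  have hIle : ∀ k, I ≤ Hb (n + k) := fun k => ciInf_le (hc.iInf_bddBelow hn) k
  -- trichotomy
  by_cases hA : ∀ M : ℕ, ∃ m, M ≤ m ∧ z m 0 = σb
  · -- there are σb's; find the first one
    have hEx : ∃ m, z m 0 = σb := by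
      obtain ⟨m, -, hm⟩ := hA 0
      exact ⟨m, hm⟩
    set m₁ := Nat.find hEx with hm₁def
    have hm₁ : z m₁ 0 = σb := Nat.find_spec hEx
    have hm₁pos : 1 ≤ m₁ := by
      by_contra hcon
      push_neg at hcon
      have h0 : m₁ = 0 := by omega
      rw [h0] at hm₁
      exact hc.hne (hz00 ▸ hm₁)
    have hbefore : ∀ m, m < m₁ → z m 0 = σa := by
      intro m hm
      have := Nat.find_min hEx hm
      exact aux_fin2_other hc.hne.symm this
    -- the first switch pays Hb (n + (m₁ - 1))
    have hfirst : H (z m₁) = Hb (n + (m₁ - 1)) := by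
      have hm₁1 : m₁ = (m₁ - 1) + 1 := by omega
      set w := z (m₁ - 1) with hw
      have hzw : z m₁ = cons2 σb w := by
        rw [hm₁1, hzsucc]
        congr 1
        have : f (z (m₁ - 1)) = z m₁ 0 := by rw [hm₁1, hzsucc]; rfl
        rw [this, hm₁]
      have hw0 : ∀ j, j < (m₁ - 1) + n → w j = σa := by
        intro j hj
        by_cases hjm : j ≤ m₁ - 1
        · rw [hw, hcoord (m₁ - 1) j hjm]
          exact hbefore _ (by omega)
        · have hj' : j = (m₁ - 1) + (j - (m₁ - 1)) := by omega
          rw [hw, hj', hcoord2]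
          exact hy0 _ (by omega)
      have hwn : w ((m₁ - 1) + n) = σb := by
        rw [hw, hcoord2]; exact hyn
      rw [hzw, hc.hswb ((m₁ - 1) + n) (by omega) w hw0 hwn]
      congr 1
      omega
    have hkey : ∀ m, m₁ ≤ m → V (z m) + I ≤ V y := by
      intro m hm
      have h1 := hTel m
      have h2 : H (z m₁) ≤ T m := hsing m₁ m hm₁pos hm
      have h3 : I ≤ H (z m₁) := by rw [hfirst]; exact hIle (m₁ - 1)
      linarith
    -- now: either eventually σb, or infinitely many σa's too
    by_cases hB : ∀ M : ℕ, ∃ m, M ≤ m ∧ z m 0 = σa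
    · -- infinitely many of both: long σb-runs occur
      -- T converges
      have hTmono : Monotone T := by
        apply monotone_nat_of_le_succ
        intro m
        have h1 := hTsucc m
        have := hc.hHnn (z (m + 1))
        linarith
      have hTbdd : BddAbove (Set.range T) := by
        refine ⟨V y - V xm, ?_⟩
        rintro r ⟨m, rfl⟩
        have := hTel m
        have := hVlb (z m)
        linarith
      have hTconv : Tendsto T atTop (𝓝 (⨆ m, T m)) := tendsto_atTop_ciSup hTmono hTbdd
      have hHto0 : Tendsto (fun m => H (z (m + 1))) atTop (𝓝 0) := by
        have h1 : Tendsto (fun m => T (m + 1) - T m) atTop (𝓝 (0 : ℝ)) := by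
          have := (hTconv.comp (tendsto_add_atTop_nat 1)).sub hTconv
          simpa using this
        apply h1.congr
        intro m
        rw [hTsucc m]
        ring
      -- claim: arbitrarily long σb-prefixes occur
      have hrun : ∀ L : ℕ, ∃ m, ∀ j, j < L → z m j = σb := by
        intro L
        by_contra hbad
        push_neg at hbad
        -- positive lower bound for Ha on [1, L]
        have hcL : ∃ c > 0, ∀ t, 1 ≤ t → t < L → c ≤ Ha t := by
          rcases Nat.lt_or_ge L 2 with hL | hL
          · exact ⟨1, one_pos, fun t ht htL => by omega⟩
          · set s := (Finset.Ico 1 L) with hs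
            have hne : s.Nonempty := ⟨1, by rw [hs]; simp; omega⟩
            refine ⟨s.inf' hne Ha, ?_, ?_⟩
            · obtain ⟨t, hts, htmin⟩ := Finset.exists_mem_eq_inf' hne Ha
              rw [htmin]
              apply hc.hapos
              rw [hs] at hts
              simp at hts
              omega
            · intro t ht htL
              exact Finset.inf'_le _ (by rw [hs]; simp; omega)
        obtain ⟨c, hcpos, hcle⟩ := hcL
        -- eventually H (z (m+1)) < c
        have hev : ∃ M₂, ∀ m, M₂ ≤ m → H (z (m + 1)) < c := by
          have := (hHto0.eventually (eventually_lt_nhds hcpos)) -- might not exist; fallback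
          rw [eventually_atTop] at this
          exact this
        obtain ⟨M₂, hM₂⟩ := hev
        -- a σb at m₂ ≥ M₂, then the first σa after m₂
        obtain ⟨m₂, hm₂ge, hm₂⟩ := hA M₂
        have hEx2 : ∃ q, m₂ < q ∧ z q 0 = σa := by
          obtain ⟨q, hq, hq'⟩ := hB (m₂ + 1)
          exact ⟨q, by omega, hq'⟩
        set m₃ := Nat.find hEx2 with hm₃def
        obtain ⟨hm₃gt, hm₃⟩ := Nat.find_spec hEx2
        have hmid : ∀ q, m₂ ≤ q → q < m₃ → z q 0 = σb := by
          intro q hq hq'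
          rcases eq_or_lt_of_le hq with h | h
          · rw [← h]; exact hm₂
          · have := Nat.find_min hEx2 hq'
            push_neg at this
            exact aux_fin2_other hc.hne (this h)
        -- run length r of σb at top of z (m₃ - 1)
        have hm₃1 : m₃ - 1 + 1 = m₃ := by omega
        obtain ⟨j₀, hj₀L, hj₀⟩ := hbad (m₃ - 1)
        have hExr : ∃ r, z (m₃ - 1) r ≠ σb := ⟨j₀, hj₀⟩
        set r := Nat.find hExr with hrdef
        have hrspec : z (m₃ - 1) r ≠ σb := Nat.find_spec hExr
        have hrlt : r < L := by
          have : r ≤ j₀ := Nat.find_min' hExr hj₀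
          omega
        have hrrun : ∀ j, j < r → z (m₃ - 1) j = σb := by
          intro j hj
          have := Nat.find_min hExr hj
          push_neg at this
          exact this
        have hrpos : 1 ≤ r := by
          rcases Nat.eq_zero_or_pos r with h | h
          · exfalso
            apply hrspec
            rw [h]
            exact hmid (m₃ - 1) (by omega) (by omega)
          · exact h
        have hra : z (m₃ - 1) r = σa := aux_fin2_other hc.hne.symm hrspec
        -- H (z m₃) = Ha r ≥ c
        have hswitch : H (z m₃) = Ha r := by
          have hzw : z m₃ = cons2 σa (z (m₃ - 1)) := by
            have h1 : z m₃ = cons2 (f (z (m₃ - 1))) (z (m₃ - 1)) := by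
              rw [← hm₃1]; exact hzsucc _
            have h2 : f (z (m₃ - 1)) = σa := (congrFun h1 0).symm.trans hm₃
            rw [h1, h2]
          rw [hzw]
          exact hc.hswa r hrpos _ hrrun hra
        have hge : c ≤ H (z m₃) := by rw [hswitch]; exact hcle r hrpos hrlt
        have hlt : H (z ((m₃ - 1) + 1)) < c := hM₂ (m₃ - 1) (by omega)
        rw [hm₃1] at hlt
        linarith
      -- choose witnesses and take the limit
      choose g hg using hrun
      have hgm₁ : ∀ L, m₁ ≤ g (L + 1) := by
        intro L
        apply Nat.find_min'
        exact hg (L + 1) 0 (by omega)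
      have hto : Tendsto (fun L => z (g (L + 1))) atTop (𝓝 (fun _ => σb : Sig)) := by
        rw [tendsto_pi_nhds]
        intro j
        apply Tendsto.congr' (f₁ := fun _ => σb) _ tendsto_const_nhds
        filter_upwards [eventually_ge_atTop j] with L hL
        exact (hg (L + 1) j (by omega)).symm
      have hVto : Tendsto (fun L => V (z (g (L + 1)))) atTop (𝓝 (V (fun _ => σb))) :=
        (hc.hVc.tendsto _).comp hto
      have : V (fun _ => σb : Sig) + I ≤ V y := by
        have h1 : Tendsto (fun L => V (z (g (L + 1))) + I) atTop (𝓝 (V (fun _ => σb : Sig) + I)) :=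
          hVto.add tendsto_const_nhds
        exact le_of_tendsto' h1 (fun L => hkey _ (hgm₁ L))
      exact (min_le_right _ _).trans this
    · -- eventually σb
      push_neg at hB
      obtain ⟨M, hM⟩ := hB
      have hMb : ∀ m, M ≤ m → z m 0 = σb := by
        intro m hm
        exact aux_fin2_other hc.hne (hM m hm)
      have hto : Tendsto z atTop (𝓝 (fun _ => σb : Sig)) := by
        rw [tendsto_pi_nhds]
        intro j
        apply Tendsto.congr' (f₁ := fun _ => σb) _ tendsto_const_nhds
        filter_upwards [eventually_ge_atTop (M + j)] with m hm
        rw [hcoord m j (by omega)]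
        exact (hMb _ (by omega)).symm
      have hVto : Tendsto (fun m => V (z m) + I) atTop (𝓝 (V (fun _ => σb : Sig) + I)) :=
        ((hc.hVc.tendsto _).comp hto).add tendsto_const_nhds
      have : V (fun _ => σb : Sig) + I ≤ V y := by
        apply le_of_tendsto hVto
        filter_upwards [eventually_ge_atTop m₁] with m hm
        exact hkey m hm
      exact (min_le_right _ _).trans this
  · -- eventually σa : converge to the σa fixed point
    push_neg at hA
    obtain ⟨M, hM⟩ := hA
    have hMa : ∀ m, M ≤ m → z m 0 = σa := by
      intro m hm
      exact aux_fin2_other hc.hne.symm (hM m hm)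
    have hto : Tendsto z atTop (𝓝 (fun _ => σa : Sig)) := by
      rw [tendsto_pi_nhds]
      intro j
      apply Tendsto.congr' (f₁ := fun _ => σa) _ tendsto_const_nhds
      filter_upwards [eventually_ge_atTop (M + j)] with m hm
      rw [hcoord m j (by omega)]
      exact (hMa _ (by omega)).symm
    have hVto : Tendsto (fun m => V (z m)) atTop (𝓝 (V (fun _ => σa : Sig))) :=
      (hc.hVc.tendsto _).comp hto
    have : V (fun _ => σa : Sig) ≤ V y := by
      apply le_of_tendsto' hVto
      intro m
      have := hTel m
      have := hTnn m
      linarith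
    exact (min_le_left _ _).trans this

lemma cyl_val (hn : 1 ≤ n) (hy0 : ∀ j, j < n → y j = σa) (hyn : y n = σb) :
    V y = min (V (fun _ => σa)) (V (fun _ => σb) + ⨅ k : ℕ, Hb (n + k)) :=
  le_antisymm (hc.upper hn hy0 hyn) (hc.lower hn hy0 hyn)

end CoreHyp
end Core

-- instantiation for a ReducedDW potential and calibrated sub-actions
lemma aux_cons2_zpt : cons2 0 zpt = zpt := by
  funext n; cases n <;> rfl

lemma aux_cons2_opt : cons2 1 opt = opt := by
  funext n; cases n <;> rfl

lemma aux_H_zpt {H : Sig → ℝ} (hz : ∀ x ∈ cyl [0, 0] ∪ cyl [1, 1], H x = 0) : H zpt = 0 := by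
  rw [← aux_cons2_zpt]; exact aux_H_same hz rfl

section Inst
variable {H : Sig → ℝ} {H0 H1 : ℕ → ℝ} {V : Sig → ℝ}

lemma aux_calib (hR : ReducedDW H H0 H1) (hV : IsCalibrated H V) :
    ∀ y, min (V (cons2 0 y) + H (cons2 0 y)) (V (cons2 1 y) + H (cons2 1 y)) = V y := by
  have hb : Hbar H = 0 := aux_Hbar_zero hR.cont hR.nonneg (aux_H_zpt hR.zero)
  intro y
  have := congrFun hV.2 y
  rw [hb, add_zero] at this
  exact this

lemma aux_core01 (hR : ReducedDW H H0 H1) (hV : IsCalibrated H V) :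
    CoreHyp H V H0 H1 0 1 where
  hne := by decide
  hVc := hV.1
  hHnn := hR.nonneg
  hcal := aux_calib hR hV
  hsame := fun i x h => aux_H_same hR.zero h
  hswb := fun t ht x h0 h1 => aux_H_sw1 hR.val1 ht h0 h1
  hswa := fun t ht x h0 h1 => aux_H_sw0 hR.val0 ht h0 h1
  hapos := hR.pos0
  hbnn := fun t ht => (hR.pos1 t ht).le

lemma aux_core10 (hR : ReducedDW H H0 H1) (hV : IsCalibrated H V) :
    CoreHyp H V H1 H0 1 0 where
  hne := by decide
  hVc := hV.1
  hHnn := hR.nonneg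
  hcal := aux_calib hR hV
  hsame := fun i x h => aux_H_same hR.zero h
  hswb := fun t ht x h0 h1 => aux_H_sw0 hR.val0 ht h0 h1
  hswa := fun t ht x h0 h1 => aux_H_sw1 hR.val1 ht h0 h1
  hapos := hR.pos1
  hbnn := fun t ht => (hR.pos0 t ht).le

lemma aux_main1 (hR : ReducedDW H H0 H1) (hV : IsCalibrated H V) :
    ∀ n : ℕ, 1 ≤ n → ∀ x ∈ cyl (List.replicate n 0 ++ [1]),
      V x = min (V zpt) (V opt + ⨅ k : ℕ, H1 (n + k)) := by
  intro n hn x hx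
  rw [aux_mem_cyl_rep] at hx
  exact (aux_core01 hR hV).cyl_val hn hx.1 hx.2

lemma aux_main2 (hR : ReducedDW H H0 H1) (hV : IsCalibrated H V) :
    ∀ n : ℕ, 1 ≤ n → ∀ x ∈ cyl (List.replicate n 1 ++ [0]),
      V x = min (V opt) (V zpt + ⨅ k : ℕ, H0 (n + k)) := by
  intro n hn x hx
  rw [aux_mem_cyl_rep] at hx
  exact (aux_core10 hR hV).cyl_val hn hx.1 hx.2

lemma aux_classify (x : Sig) : x = zpt ∨ x = opt ∨
    (∃ n, 1 ≤ n ∧ (∀ j, j < n → x j = 0) ∧ x n = 1) ∨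
    (∃ n, 1 ≤ n ∧ (∀ j, j < n → x j = 1) ∧ x n = 0) := by
  by_cases hconst : ∀ j, x j = x 0
  · rcases aux_fin2 (x 0) with h | h
    · left; funext j; rw [hconst j, h]; rfl
    · right; left; funext j; rw [hconst j, h]; rfl
  · push_neg at hconst
    have hEx : ∃ j, x j ≠ x 0 := hconst
    set t := Nat.find hEx with ht
    have hspec : x t ≠ x 0 := Nat.find_spec hEx
    have hbef : ∀ j, j < t → x j = x 0 := by
      intro j hj
      have := Nat.find_min hEx hj
      push_neg at this
      exact this
    have htpos : 1 ≤ t := by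
      by_contra hcon
      push_neg at hcon
      have : t = 0 := by omega
      rw [this] at hspec
      exact hspec rfl
    rcases aux_fin2 (x 0) with h | h
    · right; right; left
      refine ⟨t, htpos, fun j hj => (hbef j hj).trans h, ?_⟩
      exact aux_fin2_other (by decide : (0:Fin 2) ≠ 1) (h ▸ hspec)
    · right; right; right
      refine ⟨t, htpos, fun j hj => (hbef j hj).trans h, ?_⟩
      exact aux_fin2_other (by decide : (1:Fin 2) ≠ 0) (h ▸ hspec)

lemma aux_mem_cyl_rep' {n : ℕ} {a b : Fin 2} {x : Sig}
    (h1 : ∀ j, j < n → x j = a) (h2 : x n = b) : x ∈ cyl (List.replicate n a ++ [b]) :=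
  aux_mem_cyl_rep.2 ⟨h1, h2⟩

lemma aux_main3 (hR : ReducedDW H H0 H1) (hV : IsCalibrated H V) :
    IsLeast (Set.range V) (min (V zpt) (V opt)) := by
  constructor
  · rcases le_total (V zpt) (V opt) with h | h
    · exact ⟨zpt, (min_eq_left h).symm⟩
    · exact ⟨opt, (min_eq_right h).symm⟩
  · rintro v ⟨x, rfl⟩
    rcases aux_classify x with h | h | ⟨n, hn, h0, h1⟩ | ⟨n, hn, h0, h1⟩
    · rw [h]; exact min_le_left _ _
    · rw [h]; exact min_le_right _ _
    · rw [aux_main1 hR hV n hn x (aux_mem_cyl_rep' h0 h1)]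
      have hI : (0:ℝ) ≤ ⨅ k : ℕ, H1 (n + k) :=
        le_ciInf fun k => (hR.pos1 (n + k) (by omega)).le
      refine le_min (min_le_left _ _) ?_
      calc min (V zpt) (V opt) ≤ V opt := min_le_right _ _
      _ ≤ V opt + ⨅ k : ℕ, H1 (n + k) := by linarith
    · rw [aux_main2 hR hV n hn x (aux_mem_cyl_rep' h0 h1)]
      have hI : (0:ℝ) ≤ ⨅ k : ℕ, H0 (n + k) :=
        le_ciInf fun k => (hR.pos0 (n + k) (by omega)).le
      refine le_min (min_le_right _ _) ?_
      calc min (V zpt) (V opt) ≤ V zpt := min_le_left _ _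
      _ ≤ V zpt + ⨅ k : ℕ, H0 (n + k) := by linarith

end Inst

-- γ = 0 consequences
lemma aux_pos_lb (F : ℕ → ℝ) (N : ℕ) (hpos : ∀ n, 1 ≤ n → 0 < F n) :
    ∃ c > 0, ∀ n, 1 ≤ n → n < N → c ≤ F n := by
  rcases Nat.lt_or_ge N 2 with hN | hN
  · exact ⟨1, one_pos, fun n hn hnN => by omega⟩
  · set s := Finset.Ico 1 N with hs
    have hne : s.Nonempty := ⟨1, by rw [hs]; simp; omega⟩
    refine ⟨s.inf' hne F, ?_, ?_⟩
    · obtain ⟨t, hts, htmin⟩ := Finset.exists_mem_eq_inf' hne F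
      rw [htmin]
      apply hpos
      rw [hs] at hts
      simp at hts
      omega
    · intro n hn hnN
      exact Finset.inf'_le _ (by rw [hs]; simp; omega)

lemma aux_lim_zero_of_inf {F : ℕ → ℝ} {L : ℝ} (hlim : Tendsto F atTop (𝓝 L))
    (hpos : ∀ n, 1 ≤ n → 0 < F n) (hinf : (⨅ n : ℕ, F (n + 1)) = 0) : L = 0 := by
  have hLnn : 0 ≤ L := by
    apply ge_of_tendsto hlim
    filter_upwards [eventually_ge_atTop 1] with n hn
    exact (hpos n hn).le
  by_contra hne
  have hLpos : 0 < L := lt_of_le_of_ne hLnn (Ne.symm hne)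
  have hev : ∀ᶠ n in atTop, L / 2 < F n := by
    have : Set.Ioi (L/2) ∈ 𝓝 L := Ioi_mem_nhds (by linarith)
    exact hlim.eventually this
  rw [eventually_atTop] at hev
  obtain ⟨N, hN⟩ := hev
  obtain ⟨c, hcpos, hc⟩ := aux_pos_lb F N hpos
  have hlb : ∀ n : ℕ, min c (L/2) ≤ F (n + 1) := by
    intro n
    rcases Nat.lt_or_ge (n + 1) N with h | h
    · exact (min_le_left _ _).trans (hc (n+1) (by omega) h)
    · exact (min_le_right _ _).trans (hN (n+1) h).le
  have : min c (L/2) ≤ 0 := hinf ▸ le_ciInf hlb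
  have : 0 < min c (L/2) := lt_min hcpos (by linarith)
  linarith

lemma aux_gamma_zero {H : Sig → ℝ} {H0 H1 : ℕ → ℝ} (hR : ReducedDW H H0 H1)
    {Hinf0 Hinf1 Hmin0 Hmin1 γ : ℝ}
    (hinf0 : Tendsto H0 atTop (𝓝 Hinf0)) (hinf1 : Tendsto H1 atTop (𝓝 Hinf1))
    (hmin0 : Hmin0 = ⨅ n : ℕ, H0 (n + 1)) (hmin1 : Hmin1 = ⨅ n : ℕ, H1 (n + 1))
    (hγ : γ = min (min ((Hinf1 + Hinf0) / 2) (Hmin0 + Hinf1)) (Hmin1 + Hinf0))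
    (h0 : γ = 0) : Hinf0 = 0 ∧ Hinf1 = 0 := by
  have hi0nn : 0 ≤ Hinf0 := by
    apply ge_of_tendsto hinf0
    filter_upwards [eventually_ge_atTop 1] with n hn
    exact (hR.pos0 n hn).le
  have hi1nn : 0 ≤ Hinf1 := by
    apply ge_of_tendsto hinf1
    filter_upwards [eventually_ge_atTop 1] with n hn
    exact (hR.pos1 n hn).le
  have hm0nn : 0 ≤ Hmin0 := by
    rw [hmin0]; exact le_ciInf fun n => (hR.pos0 (n+1) (by omega)).le
  have hm1nn : 0 ≤ Hmin1 := by
    rw [hmin1]; exact le_ciInf fun n => (hR.pos1 (n+1) (by omega)).le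
  rw [hγ] at h0
  have h1 : (Hinf1 + Hinf0) / 2 = 0 ∨ Hmin0 + Hinf1 = 0 ∨ Hmin1 + Hinf0 = 0 := by
    rcases min_cases (min ((Hinf1 + Hinf0) / 2) (Hmin0 + Hinf1)) (Hmin1 + Hinf0) with
      ⟨h, -⟩ | ⟨h, -⟩
    · rcases min_cases ((Hinf1 + Hinf0) / 2) (Hmin0 + Hinf1) with ⟨h', -⟩ | ⟨h', -⟩
      · left; rw [← h', ← h, h0]
      · right; left; rw [← h', ← h, h0]
    · right; right; rw [← h, h0]
  rcases h1 with h | h | h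
  · constructor <;> linarith
  · have hmz : Hmin0 = 0 := by linarith
    have hiz : Hinf1 = 0 := by linarith
    refine ⟨?_, hiz⟩
    exact aux_lim_zero_of_inf hinf0 hR.pos0 (by rw [← hmin0, hmz])
  · have hmz : Hmin1 = 0 := by linarith
    have hiz : Hinf0 = 0 := by linarith
    refine ⟨hiz, ?_⟩
    exact aux_lim_zero_of_inf hinf1 hR.pos1 (by rw [← hmin1, hmz])

lemma aux_iInf_shift_zero {F : ℕ → ℝ} (hlim : Tendsto F atTop (𝓝 0))
    (hpos : ∀ n, 1 ≤ n → 0 < F n) (n : ℕ) (hn : 1 ≤ n) : (⨅ k : ℕ, F (n + k)) = 0 := by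
  have hbdd : BddBelow (Set.range fun k : ℕ => F (n + k)) := by
    refine ⟨0, ?_⟩
    rintro r ⟨k, rfl⟩
    exact (hpos (n + k) (by omega)).le
  apply le_antisymm
  · have hto : Tendsto (fun k : ℕ => F (n + k)) atTop (𝓝 0) := by
      have := hlim.comp (tendsto_add_atTop_nat n)
      apply this.congr
      intro k
      simp [Function.comp, Nat.add_comm]
    apply ge_of_tendsto hto
    filter_upwards with k
    exact ciInf_le hbdd k
  · exact le_ciInf fun k => (hpos (n + k) (by omega)).le

-- uniqueness of the calibrated sub-action with minimum 0, when Hinf0 = Hinf1 = 0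
lemma aux_unique {H : Sig → ℝ} {H0 H1 : ℕ → ℝ} (hR : ReducedDW H H0 H1)
    {Hinf0 Hinf1 : ℝ}
    (hinf0 : Tendsto H0 atTop (𝓝 Hinf0)) (hinf1 : Tendsto H1 atTop (𝓝 Hinf1))
    (hz0 : Hinf0 = 0) (hz1 : Hinf1 = 0)
    (W : Sig → ℝ) (hW : IsCalibrated H W) (hleast : IsLeast (Set.range W) 0) :
    W = fun _ => 0 := by
  have hlim0 : Tendsto H0 atTop (𝓝 0) := hz0 ▸ hinf0
  have hlim1 : Tendsto H1 atTop (𝓝 0) := hz1 ▸ hinf1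
  have hcyl0 : ∀ n : ℕ, 1 ≤ n → ∀ x : Sig, (∀ j, j < n → x j = 0) → x n = 1 →
      W x = min (W zpt) (W opt) := by
    intro n hn x h0 h1
    have := aux_main1 hR hW n hn x (aux_mem_cyl_rep' h0 h1)
    rwa [aux_iInf_shift_zero hlim1 hR.pos1 n hn, add_zero] at this
  have hcyl1 : ∀ n : ℕ, 1 ≤ n → ∀ x : Sig, (∀ j, j < n → x j = 1) → x n = 0 →
      W x = min (W opt) (W zpt) := by
    intro n hn x h0 h1
    have := aux_main2 hR hW n hn x (aux_mem_cyl_rep' h0 h1)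
    rwa [aux_iInf_shift_zero hlim0 hR.pos0 n hn, add_zero] at this
  -- W zpt = min (W zpt) (W opt) via continuity
  set p : ℕ → Sig := fun k => fun j => if j < k + 1 then (0 : Fin 2) else 1 with hp
  have hpval : ∀ k, W (p k) = min (W zpt) (W opt) := by
    intro k
    apply hcyl0 (k+1) (by omega)
    · intro j hj; rw [hp]; simp [hj]
    · rw [hp]; simp
  have hpto : Tendsto p atTop (𝓝 zpt) := by
    rw [tendsto_pi_nhds]
    intro j
    apply Tendsto.congr' (f₁ := fun _ => (0 : Fin 2)) _ tendsto_const_nhds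
    filter_upwards [eventually_ge_atTop j] with k hk
    simp only [hp]
    rw [if_pos (by omega)]
  have hWz : W zpt = min (W zpt) (W opt) := by
    have h1 : Tendsto (fun k => W (p k)) atTop (𝓝 (W zpt)) := (hW.1.tendsto _).comp hpto
    have h2 : Tendsto (fun k => W (p k)) atTop (𝓝 (min (W zpt) (W opt))) := by
      apply Tendsto.congr' (f₁ := fun _ => min (W zpt) (W opt)) _ tendsto_const_nhds
      filter_upwards with k
      exact (hpval k).symm
    exact tendsto_nhds_unique h1 h2
  set q : ℕ → Sig := fun k => fun j => if j < k + 1 then (1 : Fin 2) else 0 with hq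
  have hqval : ∀ k, W (q k) = min (W opt) (W zpt) := by
    intro k
    apply hcyl1 (k+1) (by omega)
    · intro j hj; rw [hq]; simp [hj]
    · rw [hq]; simp
  have hqto : Tendsto q atTop (𝓝 opt) := by
    rw [tendsto_pi_nhds]
    intro j
    apply Tendsto.congr' (f₁ := fun _ => (1 : Fin 2)) _ tendsto_const_nhds
    filter_upwards [eventually_ge_atTop j] with k hk
    simp only [hq]
    rw [if_pos (by omega)]
  have hWo : W opt = min (W opt) (W zpt) := by
    have h1 : Tendsto (fun k => W (q k)) atTop (𝓝 (W opt)) := (hW.1.tendsto _).comp hqto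
    have h2 : Tendsto (fun k => W (q k)) atTop (𝓝 (min (W opt) (W zpt))) := by
      apply Tendsto.congr' (f₁ := fun _ => min (W opt) (W zpt)) _ tendsto_const_nhds
      filter_upwards with k
      exact (hqval k).symm
    exact tendsto_nhds_unique h1 h2
  have heq : W zpt = W opt := hWz.trans ((min_comm _ _).trans hWo.symm)
  have hall : ∀ x, W x = W zpt := by
    intro x
    rcases aux_classify x with h | h | ⟨n, hn, h0, h1⟩ | ⟨n, hn, h0, h1⟩
    · rw [h]
    · rw [h, heq]
    · rw [hcyl0 n hn x h0 h1, ← heq, min_self]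
    · rw [hcyl1 n hn x h0 h1, heq, min_self]
  obtain ⟨x₀, hx₀⟩ := hleast.1
  have : W zpt = 0 := by rw [← hall x₀, hx₀]
  funext x
  rw [hall x, this]

-- Part 4b: eigenfunction analysis
noncomputable def VB (β : ℝ) (φ : Sig → ℝ) (x : Sig) : ℝ := -(1/β) * Real.log (φ x)

lemma aux_le_of_exp_le {β a b : ℝ} (hβ : 0 < β)
    (h : Real.exp (-β * a) ≤ Real.exp (-β * b)) : b ≤ a := by
  have := Real.exp_le_exp.mp h
  nlinarith

lemma aux_UC (φ : Sig → ℝ) (hφc : Continuous φ) (ε : ℝ) (hε : 0 < ε) :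
    ∃ m : ℕ, ∀ x y : Sig, nClose m x y → |φ x - φ y| ≤ ε := by
  by_contra hcon
  push_neg at hcon
  choose xs ys hcl habs using hcon
  obtain ⟨⟨a, b⟩, -, g, hg, hto⟩ := IsCompact.tendsto_subseq
    (x := fun m => (xs m, ys m)) isCompact_univ (fun m => Set.mem_univ _)
  have hab : a = b := by
    funext j
    have hclosed : IsClosed {q : Sig × Sig | q.1 j = q.2 j} :=
      isClosed_eq ((continuous_apply j).comp continuous_fst)
        ((continuous_apply j).comp continuous_snd)
    have hcl2 : ∀ᶠ m in atTop,
        ((fun m => (xs m, ys m)) ∘ g) m ∈ {q : Sig × Sig | q.1 j = q.2 j} := by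
      filter_upwards [eventually_ge_atTop (j+1)] with m hm
      exact hcl (g m) j (lt_of_lt_of_le (by omega) hg.le_apply)
    exact hclosed.mem_of_tendsto hto hcl2
  have hFc : Continuous (fun q : Sig × Sig => |φ q.1 - φ q.2|) :=
    continuous_abs.comp ((hφc.comp continuous_fst).sub (hφc.comp continuous_snd))
  have hF : Tendsto (fun m => |φ (xs (g m)) - φ (ys (g m))|) atTop (𝓝 |φ a - φ b|) :=
    (hFc.tendsto _).comp hto
  rw [hab, sub_self, abs_zero] at hF
  have : ε ≤ 0 := ge_of_tendsto hF (by filter_upwards with m; exact (habs (g m)).le)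
  linarith

structure EigenHyp (H : Sig → ℝ) (β : ℝ) (φ : Sig → ℝ) (lam : ℝ) : Prop where
  hβ : 0 < β
  hHc : Continuous H
  hHnn : ∀ x, 0 ≤ H x
  hsv : SummableVar H
  hHz : H zpt = 0
  hφc : Continuous φ
  hφpos : ∀ x, 0 < φ x
  hφmax : IsGreatest (Set.range φ) 1
  heig : ∀ x, Real.exp (-β * H (cons2 0 x)) * φ (cons2 0 x)
       + Real.exp (-β * H (cons2 1 x)) * φ (cons2 1 x) = lam * φ x

namespace EigenHyp

variable {H : Sig → ℝ} {β : ℝ} {φ : Sig → ℝ} {lam : ℝ}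
variable (he : EigenHyp H β φ lam)
include he

lemma hφ1 : ∀ x, φ x ≤ 1 := fun x => he.hφmax.2 ⟨x, rfl⟩

lemma hlam1 : 1 ≤ lam := by
  have h := he.heig zpt
  rw [aux_cons2_zpt, he.hHz] at h
  have h1 : Real.exp (-β * 0) = 1 := by rw [mul_zero, Real.exp_zero]
  rw [h1, one_mul] at h
  have h2 := Real.exp_pos (-β * H (cons2 1 zpt))
  have h3 := he.hφpos (cons2 1 zpt)
  have h4 := he.hφpos zpt
  nlinarith

lemma hlampos : 0 < lam := by linarith [he.hlam1]

lemma hlam2 : lam ≤ 2 := by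
  obtain ⟨y₀, hy₀⟩ := he.hφmax.1
  have h := he.heig y₀
  rw [hy₀, mul_one] at h
  have e0 : Real.exp (-β * H (cons2 0 y₀)) ≤ 1 :=
    Real.exp_le_one_iff.2 (by nlinarith [he.hHnn (cons2 0 y₀), he.hβ])
  have e1 : Real.exp (-β * H (cons2 1 y₀)) ≤ 1 :=
    Real.exp_le_one_iff.2 (by nlinarith [he.hHnn (cons2 1 y₀), he.hβ])
  have p0 := Real.exp_pos (-β * H (cons2 0 y₀))
  have p1 := Real.exp_pos (-β * H (cons2 1 y₀))
  have f0 := he.hφpos (cons2 0 y₀)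
  have f1 := he.hφpos (cons2 1 y₀)
  have g0 := he.hφ1 (cons2 0 y₀)
  have g1 := he.hφ1 (cons2 1 y₀)
  nlinarith

lemma exp_VB (x : Sig) : φ x = Real.exp (-β * VB β φ x) := by
  have hb := he.hβ
  have : -β * VB β φ x = Real.log (φ x) := by
    rw [VB]
    field_simp
  rw [this, Real.exp_log (he.hφpos x)]

lemma VB_nonneg (x : Sig) : 0 ≤ VB β φ x := by
  rw [VB]
  have h1 : Real.log (φ x) ≤ 0 := Real.log_nonpos (he.hφpos x).le (he.hφ1 x)
  have hb := he.hβ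
  have h2 : (0:ℝ) < 1/β := by positivity
  nlinarith

lemma osc : ∀ n : ℕ, ∀ x y : Sig, nClose n x y →
    φ x ≤ Real.exp (β * Rtail H n) * φ y := by
  obtain ⟨xm, -, hxm'⟩ := isCompact_univ.exists_isMinOn Set.univ_nonempty he.hφc.continuousOn
  have hxm : ∀ x, φ xm ≤ φ x := fun x => hxm' (Set.mem_univ x)
  have hxmpos := he.hφpos xm
  set S : ℕ → Set ℝ := fun n => {r | ∃ p : Sig × Sig, nClose n p.1 p.2 ∧ r = φ p.1 / φ p.2}
    with hS
  set D : ℕ → ℝ := fun n => sSup (S n) with hD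
  have hmem1 : ∀ n, (1:ℝ) ∈ S n := fun n =>
    ⟨(zpt, zpt), fun k _ => rfl, (div_self (he.hφpos zpt).ne').symm⟩
  have hbdd : ∀ n, BddAbove (S n) := by
    intro n
    refine ⟨1 / φ xm, ?_⟩
    rintro r ⟨⟨x, y⟩, -, rfl⟩
    have h1 : φ x ≤ 1 := he.hφ1 x
    have h2 : φ xm ≤ φ y := hxm y
    have h3 := he.hφpos y
    rw [div_le_div_iff₀ h3 hxmpos]
    nlinarith
  have hD1 : ∀ n, 1 ≤ D n := fun n => le_csSup (hbdd n) (hmem1 n)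
  have hDle : ∀ n, ∀ x y : Sig, nClose n x y → φ x ≤ D n * φ y := by
    intro n x y h
    have h1 : φ x / φ y ≤ D n := le_csSup (hbdd n) ⟨(x, y), h, rfl⟩
    have hy := he.hφpos y
    calc φ x = (φ x / φ y) * φ y := by field_simp
    _ ≤ D n * φ y := by nlinarith
  have hanti : ∀ m n : ℕ, m ≤ n → D n ≤ D m := by
    intro m n hmn
    apply csSup_le (Set.nonempty_of_mem (hmem1 n))
    rintro r ⟨⟨x, y⟩, hcl, rfl⟩
    exact le_csSup (hbdd m) ⟨(x, y), fun k hk => hcl k (by omega), rfl⟩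
  have hstep : ∀ n : ℕ, D n ≤ Real.exp (β * Var H (n+1)) * D (n+1) := by
    intro n
    have hrhs : 0 ≤ Real.exp (β * Var H (n+1)) * D (n+1) := by
      have := hD1 (n+1)
      have := Real.exp_pos (β * Var H (n+1))
      nlinarith
    apply Real.sSup_le _ hrhs
    rintro r ⟨⟨x, y⟩, hcl, rfl⟩
    have hclose : ∀ i : Fin 2, nClose (n+1) (cons2 i x) (cons2 i y) := by
      intro i k hk
      cases k with
      | zero => rfl
      | succ k =>
        show x k = y k
        exact hcl k (by omega)
    have hterm : ∀ i : Fin 2, Real.exp (-β * H (cons2 i x)) * φ (cons2 i x) ≤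
        (Real.exp (β * Var H (n+1)) * D (n+1)) *
        (Real.exp (-β * H (cons2 i y)) * φ (cons2 i y)) := by
      intro i
      have h1 : φ (cons2 i x) ≤ D (n+1) * φ (cons2 i y) := hDle (n+1) _ _ (hclose i)
      have h2 : Real.exp (-β * H (cons2 i x)) ≤
          Real.exp (β * Var H (n+1)) * Real.exp (-β * H (cons2 i y)) := by
        rw [← Real.exp_add]
        apply Real.exp_le_exp.2
        have hv := aux_var_bound he.hHc (hclose i)
        have hb := he.hβ
        have := abs_le.mp hv
        nlinarith
      calc Real.exp (-β * H (cons2 i x)) * φ (cons2 i x)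
          ≤ (Real.exp (β * Var H (n+1)) * Real.exp (-β * H (cons2 i y))) *
            (D (n+1) * φ (cons2 i y)) :=
            mul_le_mul h2 h1 (he.hφpos _).le (by positivity)
      _ = (Real.exp (β * Var H (n+1)) * D (n+1)) *
            (Real.exp (-β * H (cons2 i y)) * φ (cons2 i y)) := by ring
    have hsum : lam * φ x ≤ (Real.exp (β * Var H (n+1)) * D (n+1)) * (lam * φ y) := by
      rw [← he.heig x, ← he.heig y, mul_add]
      exact add_le_add (hterm 0) (hterm 1)
    have hy := he.hφpos y
    have hl := he.hlampos
    rw [div_le_iff₀ hy]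
    nlinarith
  have hiter : ∀ n k : ℕ,
      D n ≤ Real.exp (β * ∑ j ∈ Finset.range k, Var H (n+1+j)) * D (n + k) := by
    intro n k
    induction k with
    | zero =>
      simp
    | succ k ih =>
      have h1 := hstep (n + k)
      have h2 : Real.exp (β * ∑ j ∈ Finset.range k, Var H (n+1+j)) > 0 := Real.exp_pos _
      calc D n ≤ Real.exp (β * ∑ j ∈ Finset.range k, Var H (n+1+j)) * D (n + k) := ih
      _ ≤ Real.exp (β * ∑ j ∈ Finset.range k, Var H (n+1+j)) *
          (Real.exp (β * Var H (n+k+1)) * D (n+k+1)) := by nlinarith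
      _ = Real.exp (β * ∑ j ∈ Finset.range (k+1), Var H (n+1+j)) * D (n + (k+1)) := by
          rw [Finset.sum_range_succ]
          have h3 : n + 1 + k = n + k + 1 := by omega
          rw [h3, mul_add, Real.exp_add]
          have h4 : n + (k+1) = n + k + 1 := by omega
          rw [h4]
          ring
  have hiterR : ∀ n k : ℕ, D n ≤ Real.exp (β * Rtail H n) * D (n + k) := by
    intro n k
    have h1 : Real.exp (β * ∑ j ∈ Finset.range k, Var H (n+1+j)) ≤
        Real.exp (β * Rtail H n) := by
      apply Real.exp_le_exp.2
      have := aux_sum_var_le_Rtail he.hHc he.hsv n k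
      nlinarith [he.hβ]
    have h2 : 0 ≤ D (n + k) := by linarith [hD1 (n + k)]
    calc D n ≤ Real.exp (β * ∑ j ∈ Finset.range k, Var H (n+1+j)) * D (n + k) := hiter n k
    _ ≤ Real.exp (β * Rtail H n) * D (n + k) := by nlinarith
  have hDlim : ∀ ε : ℝ, 0 < ε → ∃ m, D m ≤ 1 + ε := by
    intro ε hε
    obtain ⟨m, hm⟩ := aux_UC φ he.hφc (ε * φ xm) (by positivity)
    refine ⟨m, Real.sSup_le ?_ (by linarith)⟩
    rintro r ⟨⟨x, y⟩, hcl, rfl⟩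
    have h1 : φ x - φ y ≤ ε * φ xm := (sub_le_iff_le_add'.2 (by
      have := (abs_le.mp (hm x y hcl)).2
      linarith))
    have h2 : φ xm ≤ φ y := hxm y
    have h3 := he.hφpos y
    rw [div_le_iff₀ h3]
    nlinarith
  have hDR : ∀ n, D n ≤ Real.exp (β * Rtail H n) := by
    intro n
    apply le_of_forall_pos_le_add
    intro ε hε
    have hexp := Real.exp_pos (β * Rtail H n)
    obtain ⟨m, hm⟩ := hDlim (ε / Real.exp (β * Rtail H n)) (by positivity)
    have h1 : D (n + m) ≤ D m := hanti m (n + m) (by omega)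
    calc D n ≤ Real.exp (β * Rtail H n) * D (n + m) := hiterR n m
    _ ≤ Real.exp (β * Rtail H n) * (1 + ε / Real.exp (β * Rtail H n)) := by nlinarith
    _ = Real.exp (β * Rtail H n) + ε := by field_simp
  intro n x y hcl
  have h1 := hDle n x y hcl
  have h2 := hDR n
  have h3 := he.hφpos y
  nlinarith

end EigenHyp

namespace EigenHyp

variable {H : Sig → ℝ} {β : ℝ} {φ : Sig → ℝ} {lam : ℝ}
variable (he : EigenHyp H β φ lam)
include he

lemma VB_osc {n : ℕ} {x y : Sig} (hcl : nClose n x y) :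
    VB β φ x ≤ VB β φ y + Rtail H n := by
  apply aux_le_of_exp_le he.hβ
  have h1 : φ y ≤ Real.exp (β * Rtail H n) * φ x :=
    he.osc n y x (fun k hk => (hcl k hk).symm)
  have h2 : Real.exp (-β * (VB β φ y + Rtail H n))
      = φ y * Real.exp (-(β * Rtail H n)) := by
    rw [show -β * (VB β φ y + Rtail H n) = -β * VB β φ y + (-(β * Rtail H n)) by ring,
      Real.exp_add, ← he.exp_VB y]
  have h3 : Real.exp (β * Rtail H n) * Real.exp (-(β * Rtail H n)) = 1 := by
    rw [← Real.exp_add]; simp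
  rw [h2, ← he.exp_VB x]
  nlinarith [Real.exp_pos (-(β * Rtail H n)), Real.exp_pos (β * Rtail H n), he.hφpos x]

lemma VB_step (y : Sig) (i : Fin 2) :
    VB β φ y ≤ VB β φ (cons2 i y) + H (cons2 i y) + Real.log 2 / β := by
  apply aux_le_of_exp_le he.hβ
  have hterm : Real.exp (-β * H (cons2 i y)) * φ (cons2 i y) ≤ lam * φ y := by
    have h := he.heig y
    rcases aux_fin2 i with hi | hi <;> subst hi
    · nlinarith [Real.exp_pos (-β * H (cons2 1 y)), he.hφpos (cons2 1 y)]
    · nlinarith [Real.exp_pos (-β * H (cons2 0 y)), he.hφpos (cons2 0 y)]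
  have hbne : β ≠ 0 := he.hβ.ne'
  have hbδ : β * (Real.log 2 / β) = Real.log 2 := by field_simp
  have hexp : Real.exp (-β * (VB β φ (cons2 i y) + H (cons2 i y) + Real.log 2 / β))
      = φ (cons2 i y) * Real.exp (-β * H (cons2 i y)) * (1/2) := by
    have h1 : -β * (VB β φ (cons2 i y) + H (cons2 i y) + Real.log 2 / β)
        = (-β * VB β φ (cons2 i y)) + (-β * H (cons2 i y)) + (-(β * (Real.log 2 / β))) := by
      ring
    rw [h1, hbδ, Real.exp_add, Real.exp_add, ← he.exp_VB, Real.exp_neg,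
      Real.exp_log two_pos]
    ring
  rw [hexp, ← he.exp_VB y]
  have hl2 := he.hlam2
  have hy := he.hφpos y
  have hiy := he.hφpos (cons2 i y)
  have hey := Real.exp_pos (-β * H (cons2 i y))
  nlinarith

lemma VB_greedy (y : Sig) : ∃ i : Fin 2,
    VB β φ (cons2 i y) + H (cons2 i y) ≤ VB β φ y + Real.log 2 / β := by
  have hsum := he.heig y
  have hφy := he.hφpos y
  have hl1 := he.hlam1
  have hbne : β ≠ 0 := he.hβ.ne'
  have hbδ : β * (Real.log 2 / β) = Real.log 2 := by field_simp
  have hkey : ∀ i : Fin 2,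
      φ y ≤ 2 * (Real.exp (-β * H (cons2 i y)) * φ (cons2 i y)) →
      VB β φ (cons2 i y) + H (cons2 i y) ≤ VB β φ y + Real.log 2 / β := by
    intro i hi
    apply aux_le_of_exp_le he.hβ
    have hL : Real.exp (-β * (VB β φ y + Real.log 2 / β)) = φ y * (1/2) := by
      have h1 : -β * (VB β φ y + Real.log 2 / β)
          = (-β * VB β φ y) + (-(β * (Real.log 2 / β))) := by ring
      rw [h1, hbδ, Real.exp_add, ← he.exp_VB y, Real.exp_neg, Real.exp_log two_pos]
      norm_num
    have hR : Real.exp (-β * (VB β φ (cons2 i y) + H (cons2 i y)))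
        = Real.exp (-β * H (cons2 i y)) * φ (cons2 i y) := by
      have h1 : -β * (VB β φ (cons2 i y) + H (cons2 i y))
          = (-β * VB β φ (cons2 i y)) + (-β * H (cons2 i y)) := by ring
      rw [h1, Real.exp_add, ← he.exp_VB]
      ring
    rw [hL, hR]
    nlinarith
  rcases le_total (Real.exp (-β * H (cons2 0 y)) * φ (cons2 0 y))
      (Real.exp (-β * H (cons2 1 y)) * φ (cons2 1 y)) with h | h
  · exact ⟨1, hkey 1 (by nlinarith)⟩
  · exact ⟨0, hkey 0 (by nlinarith)⟩

lemma VB_chain (hsame : ∀ i : Fin 2, ∀ w : Sig, w 0 = i → H (cons2 i w) = 0)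
    (x : Sig) (m : ℕ) :
    VB β φ x ≤ VB β φ ((cons2 (x 0))^[m] x) + (m : ℝ) * (Real.log 2 / β) := by
  induction m with
  | zero => simp
  | succ m ih =>
    rw [Function.iterate_succ_apply']
    set w := (cons2 (x 0))^[m] x with hw
    have hw0 : w 0 = x 0 := by
      rw [hw]
      cases m with
      | zero => rfl
      | succ m => rw [CoreHyp.iter_coord, if_pos (by omega)]
    have h1 := he.VB_step w (x 0)
    rw [hsame (x 0) w hw0, add_zero] at h1
    push_cast
    linarith

lemma VB_cross0 (hsame : ∀ i : Fin 2, ∀ w : Sig, w 0 = i → H (cons2 i w) = 0)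
    (hc0 : H (cons2 0 opt) = 0) (N : ℕ) :
    VB β φ opt ≤ VB β φ zpt + Rtail H N + ((N : ℝ) + 1) * (Real.log 2 / β) := by
  have h1 := he.VB_step opt 0
  rw [hc0, add_zero] at h1
  have h2 := he.VB_chain hsame (cons2 0 opt) N
  have hc00 : (cons2 0 opt) 0 = 0 := rfl
  rw [hc00] at h2
  have h3 : nClose N ((cons2 0)^[N] (cons2 0 opt)) zpt := by
    intro k hk
    rw [CoreHyp.iter_coord, if_pos hk]
    rfl
  have h4 := he.VB_osc h3
  linarith

lemma VB_cross1 (hsame : ∀ i : Fin 2, ∀ w : Sig, w 0 = i → H (cons2 i w) = 0)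
    (hc1 : H (cons2 1 zpt) = 0) (N : ℕ) :
    VB β φ zpt ≤ VB β φ opt + Rtail H N + ((N : ℝ) + 1) * (Real.log 2 / β) := by
  have h1 := he.VB_step zpt 1
  rw [hc1, add_zero] at h1
  have h2 := he.VB_chain hsame (cons2 1 zpt) N
  have hc00 : (cons2 1 zpt) 0 = 1 := rfl
  rw [hc00] at h2
  have h3 : nClose N ((cons2 1)^[N] (cons2 1 zpt)) opt := by
    intro k hk
    rw [CoreHyp.iter_coord, if_pos hk]
    rfl
  have h4 := he.VB_osc h3
  linarith

lemma VB_global (hsame : ∀ i : Fin 2, ∀ w : Sig, w 0 = i → H (cons2 i w) = 0)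
    (N : ℕ) (x : Sig) :
    VB β φ x ≤ VB β φ (fun _ => x 0) + Rtail H N + (N : ℝ) * (Real.log 2 / β) := by
  have h1 := he.VB_chain hsame x N
  have h2 : nClose N ((cons2 (x 0))^[N] x) (fun _ => x 0) := by
    intro k hk
    rw [CoreHyp.iter_coord, if_pos hk]
  have h3 := he.VB_osc h2
  linarith

lemma VB_P9 (hsame : ∀ i : Fin 2, ∀ w : Sig, w 0 = i → H (cons2 i w) = 0)
    {H0 H1 : ℕ → ℝ}
    (hsw0 : ∀ t, 1 ≤ t → ∀ x : Sig, (∀ j, j < t → x j = 1) → x t = 0 →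
      H (cons2 0 x) = H0 t)
    (hsw1 : ∀ t, 1 ≤ t → ∀ x : Sig, (∀ j, j < t → x j = 0) → x t = 1 →
      H (cons2 1 x) = H1 t)
    {N : ℕ} (hN : 1 ≤ N) {c : ℝ} (hcpos : 0 < c)
    (hc0 : ∀ t, 1 ≤ t → t < N → c ≤ H0 t) (hc1 : ∀ t, 1 ≤ t → t < N → c ≤ H1 t)
    (hβN : (N : ℝ) * (Real.log 2 / β) < c) :
    ∃ s : Fin 2, VB β φ (fun _ => s) ≤ (N : ℝ) * (Real.log 2 / β) + Rtail H N := by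
  obtain ⟨y₀, hy₀⟩ := he.hφmax.1
  have hVy₀ : VB β φ y₀ = 0 := by rw [VB, hy₀, Real.log_one, mul_zero]
  have hgr := fun w => he.VB_greedy w
  choose g hg using hgr
  set z : ℕ → Sig := fun m => (fun w => cons2 (g w) w)^[m] y₀ with hzdef
  have hzsucc : ∀ m, z (m+1) = cons2 (g (z m)) (z m) := by
    intro m
    show (fun w => cons2 (g w) w)^[m+1] y₀ = _
    rw [Function.iterate_succ_apply']
  set δ := Real.log 2 / β with hδ
  have hδnn : 0 ≤ δ := by
    rw [hδ]
    have := he.hβ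
    have := Real.log_nonneg (by norm_num : (1:ℝ) ≤ 2)
    positivity
  set T : ℕ → ℝ := fun m => ∑ j ∈ Finset.range m, H (z (j+1)) with hT
  have hTsucc : ∀ m, T (m + 1) = T m + H (z (m + 1)) := by
    intro m
    simp [hT, Finset.sum_range_succ]
  have hVT : ∀ m, VB β φ (z m) + T m ≤ (m : ℝ) * δ := by
    intro m
    induction m with
    | zero => simp [hT, hzdef, hVy₀]
    | succ m ih =>
      have h1 := hg (z m)
      rw [← hzsucc m] at h1
      have h2 := hTsucc m
      push_cast
      linarith
  have hTnn : ∀ m, 0 ≤ T m := fun m => Finset.sum_nonneg fun j _ => he.hHnn _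
  have hHle : ∀ p m : ℕ, 1 ≤ p → p ≤ m → H (z p) ≤ (m : ℝ) * δ := by
    intro p m hp hpm
    have h1 : H (z ((p-1)+1)) ≤ T m := by
      apply Finset.single_le_sum (fun j _ => he.hHnn (z (j + 1)))
      exact Finset.mem_range.2 (by omega)
    have hpp : p - 1 + 1 = p := by omega
    rw [hpp] at h1
    have h2 := hVT m
    have h3 := he.VB_nonneg (z m)
    linarith
  have hVle : ∀ m, VB β φ (z m) ≤ (m : ℝ) * δ := by
    intro m
    have := hVT m
    have := hTnn m
    linarith
  have hcsucc : ∀ m j, z (m + 1) (j + 1) = z m j := by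
    intro m j
    rw [hzsucc m, cons2_succ]
  have hcoord : ∀ m j, j ≤ m → z m j = z (m - j) 0 := by
    intro m
    induction m with
    | zero => intro j hj; interval_cases j; rfl
    | succ m ih =>
      intro j hj
      cases j with
      | zero => rfl
      | succ j =>
        rw [hcsucc m j, ih j (by omega)]
        congr 1
        omega
  by_cases hcase : ∃ m, m ≤ N ∧ ∃ s : Fin 2, ∀ j, j < N → z m j = s
  · obtain ⟨m, hm, s, hs⟩ := hcase
    have hcl : nClose N (fun _ => s : Sig) (z m) := fun k hk => (hs k hk).symm
    have h1 := he.VB_osc hcl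
    refine ⟨s, ?_⟩
    have h2 := hVle m
    have h3 : (m : ℝ) * δ ≤ (N : ℝ) * δ := by
      have : (m : ℝ) ≤ (N : ℝ) := Nat.cast_le.2 hm
      nlinarith
    linarith
  · exfalso
    push_neg at hcase
    have hdisc : ∀ m, m ≤ N → ∃ r, 1 ≤ r ∧ r < N ∧
        (∀ j, j < r → z m j = z m 0) ∧ z m r ≠ z m 0 := by
      intro m hm
      obtain ⟨j, hjN, hj⟩ := hcase m hm (z m 0)
      have hEx : ∃ j, z m j ≠ z m 0 := ⟨j, hj⟩
      have hspec := Nat.find_spec hEx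
      refine ⟨Nat.find hEx, ?_, ?_, ?_, hspec⟩
      · by_contra hcon
        push_neg at hcon
        have h0 : Nat.find hEx = 0 := by omega
        rw [h0] at hspec
        exact hspec rfl
      · have := Nat.find_min' hEx hj
        omega
      · intro j' hj'
        have := Nat.find_min hEx hj'
        push_neg at this
        exact this
    obtain ⟨r, hr1, hrN, hrrun, hrspec⟩ := hdisc N le_rfl
    have hadj : z N (r - 1) ≠ z N r := by
      rw [hrrun (r-1) (by omega)]
      exact fun hh => hrspec hh.symm
    set p := N - r with hp
    have e1 : z N r = z p 0 := by
      rw [hcoord N r (by omega)]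
    have e2 : z N (r-1) = z (p+1) 0 := by
      rw [hcoord N (r-1) (by omega)]
      congr 1
      omega
    have hne : z (p+1) 0 ≠ z p 0 := by
      rw [← e1, ← e2]
      exact hadj
    have hpN : p + 1 ≤ N := by omega
    obtain ⟨r', h1r', hr'N, hrun', hspec'⟩ := hdisc p (by omega)
    have hz1 : z (p+1) = cons2 (g (z p)) (z p) := hzsucc p
    have hg0 : g (z p) = z (p+1) 0 := by rw [hz1]; rfl
    have hHzp1 : c ≤ H (z (p+1)) := by
      rcases aux_fin2 (z p 0) with h0 | h0
      · have hs1 : g (z p) = 1 := by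
          rw [hg0]
          exact aux_fin2_other (by decide : (0:Fin 2) ≠ 1) (h0 ▸ hne)
        have hval : H (z (p+1)) = H1 r' := by
          rw [hz1, hs1]
          exact hsw1 r' h1r' (z p) (fun j hj => (hrun' j hj).trans h0)
            (aux_fin2_other (by decide : (0:Fin 2) ≠ 1) (fun hh => hspec' (hh.trans h0.symm)))
        rw [hval]
        exact hc1 r' h1r' hr'N
      · have hs1 : g (z p) = 0 := by
          rw [hg0]
          exact aux_fin2_other (by decide : (1:Fin 2) ≠ 0) (h0 ▸ hne)
        have hval : H (z (p+1)) = H0 r' := by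
          rw [hz1, hs1]
          exact hsw0 r' h1r' (z p) (fun j hj => (hrun' j hj).trans h0)
            (aux_fin2_other (by decide : (1:Fin 2) ≠ 0) (fun hh => hspec' (hh.trans h0.symm)))
        rw [hval]
        exact hc0 r' h1r' hr'N
    have := hHle (p+1) N (by omega) hpN
    have hcast : ((p:ℝ) + 1) ≤ (N : ℝ) := by exact_mod_cast hpN
    linarith

end EigenHyp

-- H at the heteroclinic fixed limits
lemma aux_H_cons0_opt {H : Sig → ℝ} {H0 H1 : ℕ → ℝ} (hR : ReducedDW H H0 H1)
    {Hinf0 : ℝ} (hinf0 : Tendsto H0 atTop (𝓝 Hinf0)) : H (cons2 0 opt) = Hinf0 := by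
  set p : ℕ → Sig := fun k => cons2 0 (fun j => if j < k + 1 then 1 else 0) with hp
  have hval : ∀ k, H (p k) = H0 (k + 1) := by
    intro k
    apply hR.val0 (k+1) (by omega)
    apply aux_mem_cyl_cons rfl
    apply aux_mem_cyl_rep'
    · intro j hj
      show (if j < k + 1 then (1:Fin 2) else 0) = 1
      rw [if_pos hj]
    · show (if k + 1 < k + 1 then (1:Fin 2) else 0) = 0
      rw [if_neg (lt_irrefl _)]
  have hto : Tendsto p atTop (𝓝 (cons2 0 opt)) := by
    rw [tendsto_pi_nhds]
    intro j
    apply Tendsto.congr' (f₁ := fun _ => cons2 0 opt j) _ tendsto_const_nhds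
    filter_upwards [eventually_ge_atTop j] with k hk
    cases j with
    | zero => rfl
    | succ i =>
      show (1 : Fin 2) = (if i < k + 1 then (1:Fin 2) else 0)
      rw [if_pos (by omega)]
  have h1 : Tendsto (fun k => H (p k)) atTop (𝓝 (H (cons2 0 opt))) :=
    (hR.cont.tendsto _).comp hto
  have h2 : Tendsto (fun k => H (p k)) atTop (𝓝 Hinf0) := by
    have := hinf0.comp (tendsto_add_atTop_nat 1)
    apply this.congr
    intro k
    exact (hval k).symm
  exact tendsto_nhds_unique h1 h2

lemma aux_H_cons1_zpt {H : Sig → ℝ} {H0 H1 : ℕ → ℝ} (hR : ReducedDW H H0 H1)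
    {Hinf1 : ℝ} (hinf1 : Tendsto H1 atTop (𝓝 Hinf1)) : H (cons2 1 zpt) = Hinf1 := by
  set p : ℕ → Sig := fun k => cons2 1 (fun j => if j < k + 1 then 0 else 1) with hp
  have hval : ∀ k, H (p k) = H1 (k + 1) := by
    intro k
    apply hR.val1 (k+1) (by omega)
    apply aux_mem_cyl_cons rfl
    apply aux_mem_cyl_rep'
    · intro j hj
      show (if j < k + 1 then (0:Fin 2) else 1) = 0
      rw [if_pos hj]
    · show (if k + 1 < k + 1 then (0:Fin 2) else 1) = 1
      rw [if_neg (lt_irrefl _)]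
  have hto : Tendsto p atTop (𝓝 (cons2 1 zpt)) := by
    rw [tendsto_pi_nhds]
    intro j
    apply Tendsto.congr' (f₁ := fun _ => cons2 1 zpt j) _ tendsto_const_nhds
    filter_upwards [eventually_ge_atTop j] with k hk
    cases j with
    | zero => rfl
    | succ i =>
      show (0 : Fin 2) = (if i < k + 1 then (0:Fin 2) else 1)
      rw [if_pos (by omega)]
  have h1 : Tendsto (fun k => H (p k)) atTop (𝓝 (H (cons2 1 zpt))) :=
    (hR.cont.tendsto _).comp hto
  have h2 : Tendsto (fun k => H (p k)) atTop (𝓝 Hinf1) := by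
    have := hinf1.comp (tendsto_add_atTop_nat 1)
    apply this.congr
    intro k
    exact (hval k).symm
  exact tendsto_nhds_unique h1 h2

/-- description of calibrated sub-actions of a reduced double-well type
potential on the cylinders `[0^n 1]` and `[1^n 0]`; if moreover `γ = 0`, the zero function is
the unique calibrated sub-action with minimum `0`, and `V_β = -β⁻¹ ln Φ_β → 0` uniformly. -/
theorem stmt_15 (H : Sig → ℝ) (H0 H1 : ℕ → ℝ) (hR : ReducedDW H H0 H1)
    (Hinf0 Hinf1 Hmin0 Hmin1 γ : ℝ)
    (hinf0 : Tendsto H0 atTop (𝓝 Hinf0)) (hinf1 : Tendsto H1 atTop (𝓝 Hinf1))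
    (hmin0 : Hmin0 = ⨅ n : ℕ, H0 (n + 1)) (hmin1 : Hmin1 = ⨅ n : ℕ, H1 (n + 1))
    (hγ : γ = min (min ((Hinf1 + Hinf0) / 2) (Hmin0 + Hinf1)) (Hmin1 + Hinf0))
    (V : Sig → ℝ) (hV : IsCalibrated H V)
    (Φ : ℝ → Sig → ℝ) (lam : ℝ → ℝ)
    (hG : ∀ β : ℝ, 0 < β → Continuous (Φ β) ∧ (∀ x, 0 < Φ β x) ∧
      IsGreatest (Set.range (Φ β)) 1 ∧ 0 < lam β ∧
      (transfer β H (Φ β) = fun x => lam β * Φ β x)) :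
    (∀ n : ℕ, 1 ≤ n → ∀ x ∈ cyl (List.replicate n 0 ++ [1]),
      V x = min (V zpt) (V opt + ⨅ k : ℕ, H1 (n + k))) ∧
    (∀ n : ℕ, 1 ≤ n → ∀ x ∈ cyl (List.replicate n 1 ++ [0]),
      V x = min (V opt) (V zpt + ⨅ k : ℕ, H0 (n + k))) ∧
    IsLeast (Set.range V) (min (V zpt) (V opt)) ∧
    (γ = 0 →
      (∀ W : Sig → ℝ, IsCalibrated H W → IsLeast (Set.range W) 0 → W = fun _ => 0) ∧
      TendstoUniformly (fun (β : ℝ) (x : Sig) => -(1 / β) * Real.log (Φ β x))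
        (fun _ => 0) atTop) := by
  refine ⟨aux_main1 hR hV, aux_main2 hR hV, aux_main3 hR hV, ?_⟩
  intro hγ0
  obtain ⟨hz0, hz1⟩ := aux_gamma_zero hR hinf0 hinf1 hmin0 hmin1 hγ hγ0
  refine ⟨fun W hW hleast => aux_unique hR hinf0 hinf1 hz0 hz1 W hW hleast, ?_⟩
  -- uniform convergence of V_β to 0
  rw [Metric.tendstoUniformly_iff]
  intro ε hε
  -- choose N with tail variation small
  have hRt := aux_Rtail_tendsto (H := H) hR.svar
  have hevR : ∀ᶠ n in atTop, Rtail H n < ε / 8 :=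
    hRt.eventually (Iio_mem_nhds (show (0:ℝ) < ε / 8 by positivity))
  rw [eventually_atTop] at hevR
  obtain ⟨N₀, hN₀⟩ := hevR
  set N := max N₀ 1 with hNdef
  have hN1 : 1 ≤ N := le_max_right _ _
  have hRN : Rtail H N < ε / 8 := hN₀ N (le_max_left _ _)
  have hRNnn : 0 ≤ Rtail H N := aux_Rtail_nonneg hR.cont hR.svar N
  -- positive lower bound for switch costs on short runs
  obtain ⟨c0, hc0pos, hc0⟩ := aux_pos_lb H0 N hR.pos0
  obtain ⟨c1, hc1pos, hc1⟩ := aux_pos_lb H1 N hR.pos1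
  set c := min c0 c1 with hcdef
  have hcpos : 0 < c := lt_min hc0pos hc1pos
  have hlog2 : 0 < Real.log 2 := Real.log_pos (by norm_num)
  -- threshold
  set B := max 1 (max ((N : ℝ) * Real.log 2 / c + 1)
    ((3 * (N : ℝ) + 1) * Real.log 2 / (ε / 2) + 1)) with hBdef
  refine eventually_atTop.2 ⟨B, fun β hβB => ?_⟩
  have hβ1 : (1:ℝ) ≤ β := le_trans (le_max_left _ _) hβB
  have hβpos : 0 < β := by linarith
  obtain ⟨hφc, hφpos, hφmax, hlmp, heig⟩ := hG β hβpos
  have he : EigenHyp H β (Φ β) (lam β) :=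
    ⟨hβpos, hR.cont, hR.nonneg, hR.svar, aux_H_zpt hR.zero, hφc, hφpos, hφmax,
      fun x => congrFun heig x⟩
  set δ := Real.log 2 / β with hδdef
  have hδpos : 0 < δ := by positivity
  -- numeric conditions on β
  have hδc : (N : ℝ) * δ < c := by
    have h1 : (N : ℝ) * Real.log 2 / c + 1 ≤ β :=
      le_trans (le_trans (le_max_left _ _) (le_max_right _ _)) hβB
    have h2 : c * ((N : ℝ) * Real.log 2 / c) = (N : ℝ) * Real.log 2 := by
      field_simp
    have h3 : (N : ℝ) * δ = (N : ℝ) * Real.log 2 / β := by rw [hδdef]; ring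
    rw [h3, div_lt_iff₀ hβpos]
    nlinarith [mul_le_mul_of_nonneg_left h1 hcpos.le]
  have hδε : (3 * (N : ℝ) + 1) * δ ≤ ε / 2 := by
    have h1 : (3 * (N : ℝ) + 1) * Real.log 2 / (ε / 2) + 1 ≤ β :=
      le_trans (le_trans (le_max_right _ _) (le_max_right _ _)) hβB
    have hε2 : (0:ℝ) < ε / 2 := by positivity
    have h2 : (ε / 2) * ((3 * (N : ℝ) + 1) * Real.log 2 / (ε / 2))
        = (3 * (N : ℝ) + 1) * Real.log 2 := by
      field_simp
    have h3 : (3 * (N : ℝ) + 1) * δ = (3 * (N : ℝ) + 1) * Real.log 2 / β := by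
      rw [hδdef]; ring
    rw [h3, div_le_iff₀ hβpos]
    nlinarith [mul_le_mul_of_nonneg_left h1 hε2.le]
  -- structural hypotheses
  have hsame : ∀ i : Fin 2, ∀ w : Sig, w 0 = i → H (cons2 i w) = 0 :=
    fun i w h => aux_H_same hR.zero h
  have hcross0 : H (cons2 0 opt) = 0 := by
    rw [aux_H_cons0_opt hR hinf0, hz0]
  have hcross1 : H (cons2 1 zpt) = 0 := by
    rw [aux_H_cons1_zpt hR hinf1, hz1]
  -- P9: some fixed point has small V_β
  obtain ⟨s, hs⟩ := he.VB_P9 hsame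
    (fun t ht x h0 h1 => aux_H_sw0 hR.val0 ht h0 h1)
    (fun t ht x h0 h1 => aux_H_sw1 hR.val1 ht h0 h1)
    hN1 hcpos
    (fun t h1 h2 => le_trans (min_le_left c0 c1) (hc0 t h1 h2))
    (fun t h1 h2 => le_trans (min_le_right c0 c1) (hc1 t h1 h2))
    hδc
  -- both fixed points have small V_β
  have hzo : VB β (Φ β) zpt ≤ ((N:ℝ) * δ + Rtail H N) + (Rtail H N + ((N:ℝ) + 1) * δ) ∧
      VB β (Φ β) opt ≤ ((N:ℝ) * δ + Rtail H N) + (Rtail H N + ((N:ℝ) + 1) * δ) := by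
    have hcr0 := he.VB_cross0 hsame hcross0 N
    have hcr1 := he.VB_cross1 hsame hcross1 N
    rcases aux_fin2 s with h | h
    · rw [h] at hs
      have hz : VB β (Φ β) zpt ≤ (N:ℝ) * δ + Rtail H N := hs
      constructor
      · have : (0:ℝ) ≤ Rtail H N + ((N:ℝ) + 1) * δ := by positivity
        linarith
      · linarith
    · rw [h] at hs
      have ho : VB β (Φ β) opt ≤ (N:ℝ) * δ + Rtail H N := hs
      constructor
      · linarith
      · have : (0:ℝ) ≤ Rtail H N + ((N:ℝ) + 1) * δ := by positivity
        linarith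
  -- global bound
  intro x
  have hgl := he.VB_global hsame N x
  have hexp : (3 * (N:ℝ) + 1) * δ = (N:ℝ) * δ + ((N:ℝ) + 1) * δ + (N:ℝ) * δ := by ring
  have hbound : VB β (Φ β) x ≤ 3 * Rtail H N + (3 * (N:ℝ) + 1) * δ := by
    rcases aux_fin2 (x 0) with h | h
    · rw [h] at hgl
      have hzz : (fun _ => (0:Fin 2)) = zpt := rfl
      rw [hzz] at hgl
      have := hzo.1
      linarith
    · rw [h] at hgl
      have hoo : (fun _ => (1:Fin 2)) = opt := rfl
      rw [hoo] at hgl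
      have := hzo.2
      linarith
  have hfin : VB β (Φ β) x < ε := by
    have : 3 * Rtail H N < 3 * (ε / 8) := by linarith
    linarith
  show dist ((fun _ => (0:ℝ)) x) (-(1 / β) * Real.log (Φ β x)) < ε
  have hVBx : -(1 / β) * Real.log (Φ β x) = VB β (Φ β) x := rfl
  rw [hVBx, Real.dist_eq, show ((fun _ => (0:ℝ)) x) = 0 from rfl, zero_sub, abs_neg,
    abs_of_nonneg (he.VB_nonneg x)]
  exact hfin
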